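/- The eta-expansion transformation [[M]]^{τ⇒τ'} is type-preserving: if τ and τ' are location-annotated function types that become identical upon erasing all location annotations, and Γ ⊢_a M : τ, then Γ ⊢_a [[M]]^{τ⇒τ'} : τ'. The transformation is defined by [[M]]^{τ⇒τ} = M, and [[M]]^{τ₁→^a τ₂ ⇒ τ₃→^b τ₄} = λ^b x.[[ M [[x]]^{τ₃⇒τ₁} ]]^{τ₂⇒τ₄}. -/
import Mathlib


/-! Locations of the RPC calculus: client and server. -/
inductive Loc | c | s
deriving DecidableEq, Repr

/-! Types: base and location-annotated function types τ →^a τ'. -/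
inductive Ty | base | arr (t : Ty) (a : Loc) (t' : Ty)
deriving DecidableEq, Repr

/-! Terms of λ_rpc in de Bruijn representation. -/
inductive Tm
| var (n : Nat)
| lam (a : Loc) (body : Tm)
| app (l m : Tm)
deriving DecidableEq, Repr

/-- Values are variables and λ-abstractions. -/
def IsValue : Tm → Prop
| .var _ => True
| .lam _ _ => True
| .app _ _ => False

/-- de Bruijn lifting. -/
def lift (d : Nat) : Tm → Tm
| .var n => .var (if n < d then n else n + 1)
| .lam a m => .lam a (lift (d + 1) m)
| .app l m => .app (lift d l) (lift d m)

/-- Capture-avoiding substitution of `w` for de Bruijn index `k`. -/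
def subst (k : Nat) (w : Tm) : Tm → Tm
| .var n => if n = k then w else .var (if n < k then n else n - 1)
| .lam a m => .lam a (subst (k + 1) (lift 0 w) m)
| .app l m => .app (subst k w l) (subst k w m)

/-- Big-step semantics M ⇓_a V of λ_rpc. -/
inductive Eval : Loc → Tm → Tm → Prop
| value {a V} : IsValue V → Eval a V V
| beta {a b L M N W V} : Eval a L (.lam b N) → Eval a M W →
    Eval b (subst 0 W N) V → Eval a (.app L M) V

/-- The locative type system Γ ⊢_a M : τ. -/
inductive Typing : List Ty → Loc → Tm → Ty → Prop
| var {Γ a n τ} : Γ[n]? = some τ → Typing Γ a (.var n) τ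
| lam {Γ a b M τ τ'} : Typing (τ :: Γ) b M τ' →
    Typing Γ a (.lam b M) (.arr τ b τ')
| app {Γ a L M τ τ'} : Typing Γ a L (.arr τ a τ') → Typing Γ a M τ →
    Typing Γ a (.app L M) τ'
| req {Γ L M τ τ'} : Typing Γ .c L (.arr τ .s τ') → Typing Γ .c M τ →
    Typing Γ .c (.app L M) τ'
| call {Γ L M τ τ'} : Typing Γ .s L (.arr τ .c τ') → Typing Γ .s M τ →
    Typing Γ .s (.app L M) τ'

/-! Location-erased types and type erasure. -/
inductive ETy | base | arr (t t' : ETy)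
deriving DecidableEq, Repr

def erase : Ty → ETy
| .base => .base
| .arr t _ t' => .arr (erase t) (erase t')

/-- The eta-expansion transformation [[M]]^{τ⇒τ'}:
[[M]]^{τ⇒τ} = M and
[[M]]^{τ₁→^a τ₂ ⇒ τ₃→^b τ₄} = λ^b x.[[ M [[x]]^{τ₃⇒τ₁} ]]^{τ₂⇒τ₄}. -/
def eta : Ty → Ty → Tm → Tm
| τ, τ', M =>
  if τ = τ' then M
  else
    match τ, τ' with
    | .arr t1 _ t2, .arr t3 b t4 =>
        .lam b (eta t2 t4 (.app (lift 0 M) (eta t3 t1 (.var 0))))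
    | _, _ => M
termination_by τ τ' _ => sizeOf τ + sizeOf τ'
decreasing_by all_goals (simp_wf; omega)

lemma anyApp {Γ : List Ty} {a x : Loc} {L M : Tm} {τ τ' : Ty}
    (hL : Typing Γ a L (.arr τ x τ')) (hM : Typing Γ a M τ) :
    Typing Γ a (.app L M) τ' := by
  cases a <;> cases x
  · exact Typing.app hL hM
  · exact Typing.req hL hM
  · exact Typing.call hL hM
  · exact Typing.app hL hM

lemma relocate {Γ a M τ} (h : Typing Γ a M τ) : ∀ b, Typing Γ b M τ := by
  induction h with
  | var h => exact fun b => Typing.var h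
  | lam _ ih => exact fun b => Typing.lam (ih _)
  | app _ _ ih1 ih2 => exact fun b => anyApp (ih1 b) (ih2 b)
  | req _ _ ih1 ih2 => exact fun b => anyApp (ih1 b) (ih2 b)
  | call _ _ ih1 ih2 => exact fun b => anyApp (ih1 b) (ih2 b)

lemma weaken {Γ a M τ} (h : Typing Γ a M τ) :
    ∀ Γ₁ Γ₂ σ, Γ = Γ₁ ++ Γ₂ →
      Typing (Γ₁ ++ σ :: Γ₂) a (lift Γ₁.length M) τ := by
  induction h with
  | @var Γ a n τ h =>
    intro Γ₁ Γ₂ σ hΓ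
    subst hΓ
    simp only [lift]
    split
    · next hn =>
      refine Typing.var ?_
      simp only [List.getElem?_append, if_pos hn] at h ⊢
      exact h
    · next hn =>
      refine Typing.var ?_
      have hn' : Γ₁.length ≤ n := by omega
      rw [List.getElem?_append_right hn'] at h
      rw [List.getElem?_append_right (by omega)]
      have : n + 1 - Γ₁.length = (n - Γ₁.length) + 1 := by omega
      rw [this]
      simpa using h
  | @lam Γ a b M τ τ' _ ih =>
    intro Γ₁ Γ₂ σ hΓ
    subst hΓ
    simp only [lift]
    exact Typing.lam (ih (τ :: Γ₁) Γ₂ σ rfl)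
  | @app Γ a L M τ τ' _ _ ih1 ih2 =>
    intro Γ₁ Γ₂ σ hΓ
    exact Typing.app (ih1 Γ₁ Γ₂ σ hΓ) (ih2 Γ₁ Γ₂ σ hΓ)
  | @req Γ L M τ τ' _ _ ih1 ih2 =>
    intro Γ₁ Γ₂ σ hΓ
    exact Typing.req (ih1 Γ₁ Γ₂ σ hΓ) (ih2 Γ₁ Γ₂ σ hΓ)
  | @call Γ L M τ τ' _ _ ih1 ih2 =>
    intro Γ₁ Γ₂ σ hΓ
    exact Typing.call (ih1 Γ₁ Γ₂ σ hΓ) (ih2 Γ₁ Γ₂ σ hΓ)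

lemma weaken0 {Γ a M τ} (σ : Ty) (h : Typing Γ a M τ) :
    Typing (σ :: Γ) a (lift 0 M) τ :=
  weaken h [] Γ σ rfl

lemma eta_pres : ∀ N τ τ', sizeOf τ + sizeOf τ' ≤ N → erase τ = erase τ' →
    ∀ (Γ : List Ty) (a : Loc) (M : Tm), Typing Γ a M τ → Typing Γ a (eta τ τ' M) τ' := by
  intro N
  induction N with
  | zero =>
    intro τ τ' h
    exfalso
    cases τ <;> simp only [Ty.base.sizeOf_spec, Ty.arr.sizeOf_spec] at h <;> omega
  | succ N ih =>
    intro τ τ' hsz her Γ a M hty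
    cases τ with
    | base =>
      cases τ' with
      | base =>
        rw [eta, if_pos rfl]
        · exact hty
        · exact fun _ _ _ _ _ _ h _ => Ty.noConfusion h
      | arr t3 lb t4 => simp [erase] at her
    | arr t1 la t2 =>
      cases τ' with
      | base => simp [erase] at her
      | arr t3 lb t4 =>
        by_cases heq : Ty.arr t1 la t2 = Ty.arr t3 lb t4
        · rw [eta, if_pos heq]; rw [heq] at hty; exact hty
        · rw [eta, if_neg heq]
          show Typing Γ a
            (.lam lb (eta t2 t4 (.app (lift 0 M) (eta t3 t1 (.var 0)))))
            (.arr t3 lb t4)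
          simp only [erase, ETy.arr.injEq] at her
          obtain ⟨h13, h24⟩ := her
          simp only [Ty.arr.sizeOf_spec] at hsz
          refine Typing.lam ?_
          refine ih t2 t4 (by omega) h24 _ _ _ ?_
          refine anyApp (relocate (weaken0 t3 hty) lb) ?_
          exact ih t3 t1 (by omega) h13.symm _ _ _ (Typing.var (by simp))


/-- The eta-expansion transformation is type-preserving: if τ and τ' are
location-annotated function types with the same erasure and Γ ⊢_a M : τ,
then Γ ⊢_a [[M]]^{τ⇒τ'} : τ'. -/
theorem rpc_eta_transformation_type_preserving {Γ : List Ty} {a : Loc}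
    {M : Tm} (t1 t2 t3 t4 : Ty) (la lb : Loc)
    (herase : erase (.arr t1 la t2) = erase (.arr t3 lb t4))
    (hty : Typing Γ a M (.arr t1 la t2)) :
    Typing Γ a (eta (.arr t1 la t2) (.arr t3 lb t4) M) (.arr t3 lb t4) :=
  eta_pres _ _ _ le_rfl herase Γ a M hty
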